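/- (Nivat theorem for weighted timed automata.) Let Σ be an alphabet and 𝕄 = (M,+,val,𝟘) a timed valuation monoid. Then Rec(Σ,𝕄) = N^Seq(Σ,𝕄) = N^Det(Σ,𝕄) = N^Unamb(Σ,𝕄) ⊆ N(Σ,𝕄). -/

import Mathlib

open scoped NNReal Classical

/-! # Core definitions: timed automata and weighted timed automata -/

/-- Comparison operators ⋈ ∈ {<, ≤, =, ≥, >}. -/
inductive Cmp : Type
  | lt | le | eq | ge | gt
  deriving DecidableEq

/-- Evaluation of a comparison `r ⋈ c` for `r ∈ ℝ≥0` and `c ∈ ℕ`. -/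
def Cmp.eval : Cmp → ℝ≥0 → ℕ → Prop
  | .lt, r, c => r < (c : ℝ≥0)
  | .le, r, c => r ≤ (c : ℝ≥0)
  | .eq, r, c => r = (c : ℝ≥0)
  | .ge, r, c => (c : ℝ≥0) ≤ r
  | .gt, r, c => (c : ℝ≥0) < r

/-- Clock constraints over a set `C` of clocks: `True` or conjunctions of `x ⋈ c`. -/
inductive ClockConstraint (C : Type) : Type
  | tt : ClockConstraint C
  | atom : C → Cmp → ℕ → ClockConstraint C
  | conj : ClockConstraint C → ClockConstraint C → ClockConstraint C

/-- A clock valuation assigns a non-negative real to each clock. -/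
def ClockVal (C : Type) : Type := C → ℝ≥0

/-- Satisfaction of clock constraints. -/
def ClockConstraint.Sat {C : Type} (ν : ClockVal C) : ClockConstraint C → Prop
  | .tt => True
  | .atom x op c => op.eval (ν x) c
  | .conj φ ψ => φ.Sat ν ∧ ψ.Sat ν

/-- `ν + t`: add `t` to every clock. -/
def ClockVal.add {C : Type} (ν : ClockVal C) (t : ℝ≥0) : ClockVal C := fun x => ν x + t

/-- `ν[Λ := 0]`: reset the clocks in `Λ` to `0`. -/
noncomputable def ClockVal.reset {C : Type} (ν : ClockVal C) (Λ : Set C) : ClockVal C :=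
  fun x => if x ∈ Λ then 0 else ν x

/-- The clock valuation assigning `0` to every clock. -/
def ClockVal.zero {C : Type} : ClockVal C := fun _ => 0

/-- An edge of a timed automaton: an element of `L × Σ × Φ(C) × 2^C × L`. -/
structure Edge (L A C : Type) : Type where
  src : L
  label : A
  guard : ClockConstraint C
  reset : Set C
  dst : L

/-- A timed automaton over the alphabet `A`. -/
structure TimedAutomaton (A : Type) : Type 1 where
  L : Type
  C : Type
  finL : Finite L
  finC : Finite C
  I : Set L
  F : Set L
  E : Set (Edge L A C)
  finE : E.Finite

/-- A (non-empty finite) timed word over `A`. -/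
abbrev TimedWord (A : Type) : Type := { w : List (A × ℝ≥0) // w ≠ [] }

/-- `T.IsRunFrom ℓ ν w es` holds iff `es` is the sequence of edges of a run of `T`
reading the timed word `w`, starting in location `ℓ` with clock valuation `ν`,
and ending in a final location. -/
def TimedAutomaton.IsRunFrom {A : Type} (T : TimedAutomaton A) :
    T.L → ClockVal T.C → List (A × ℝ≥0) → List (Edge T.L A T.C) → Prop
  | ℓ, _, [], [] => ℓ ∈ T.F
  | ℓ, ν, (a, t) :: w, e :: es =>
      e ∈ T.E ∧ e.src = ℓ ∧ e.label = a ∧ e.guard.Sat (ν.add t) ∧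
      T.IsRunFrom e.dst ((ν.add t).reset e.reset) w es
  | _, _, [], _ :: _ => False
  | _, _, _ :: _, [] => False

/-- `Run_T(w)`: the set of runs (identified with their edge sequences) of `T` on `w`. -/
def TimedAutomaton.RunOn {A : Type} (T : TimedAutomaton A) (w : TimedWord A) :
    Set (List (Edge T.L A T.C)) :=
  { es | ∃ ℓ₀ ∈ T.I, T.IsRunFrom ℓ₀ ClockVal.zero w.1 es }

/-- `L(T)`: the timed language accepted by `T`. -/
def TimedAutomaton.Lang {A : Type} (T : TimedAutomaton A) : Set (TimedWord A) :=
  { w | (T.RunOn w).Nonempty }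

/-- A timed automaton is unambiguous if every timed word has at most one run. -/
def TimedAutomaton.Unambiguous {A : Type} (T : TimedAutomaton A) : Prop :=
  ∀ w : TimedWord A, (T.RunOn w).Subsingleton

/-- A timed automaton is deterministic if it has a single initial location and the guards of
any two distinct edges with the same source and label are jointly unsatisfiable. -/
def TimedAutomaton.Deterministic {A : Type} (T : TimedAutomaton A) : Prop :=
  (∃ ℓ, T.I = {ℓ}) ∧
  ∀ e₁ ∈ T.E, ∀ e₂ ∈ T.E, e₁.src = e₂.src → e₁.label = e₂.label → e₁ ≠ e₂ →
    ∀ ν : ClockVal T.C, ¬ (e₁.guard.Sat ν ∧ e₂.guard.Sat ν)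

/-- A timed automaton is sequential if it has a single initial location and any two edges
with the same source and label are equal. -/
def TimedAutomaton.Sequential {A : Type} (T : TimedAutomaton A) : Prop :=
  (∃ ℓ, T.I = {ℓ}) ∧
  ∀ e₁ ∈ T.E, ∀ e₂ ∈ T.E, e₁.src = e₂.src → e₁.label = e₂.label → e₁ = e₂

/-- A timed language is recognizable by a timed automaton satisfying `P`. -/
def TLRecognizableBy {A : Type} (P : TimedAutomaton A → Prop) (𝓛 : Set (TimedWord A)) : Prop :=
  ∃ T : TimedAutomaton A, P T ∧ T.Lang = 𝓛

/-- A weighted timed automaton over the alphabet `A` and (the domain `M` of) a timed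
valuation monoid: a timed automaton together with weights on locations and edges.
The timed valuation monoid itself is given by an `AddCommMonoid M` instance together with a
timed valuation function `val : List ((M × M) × ℝ≥0) → M` (only its values on non-empty
lists, i.e. on `𝕋(M×M)⁺`, ever matter). -/
structure WTA (A M : Type) extends TimedAutomaton A where
  wtL : L → M
  wtE : Edge L A C → M

/-- The timed word `wt♯(ρ) ∈ 𝕋(M×M)⁺` associated with a run: the `i`-th letter is
`((wt(ℓ_{i-1}), wt(e_i)), t_i)`, where `ℓ_{i-1}` is the source location of edge `e_i`. -/
def WTA.runWord {A M : Type} (W : WTA A M) (w : List (A × ℝ≥0))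
    (es : List (Edge W.L A W.C)) : List ((M × M) × ℝ≥0) :=
  List.zipWith (fun (p : A × ℝ≥0) e => ((W.wtL e.src, W.wtE e), p.2)) w es

/-- The behavior `‖W‖ : 𝕋A⁺ → M` of a WTA: `‖W‖(w) = Σ (val(wt♯(ρ)) : ρ ∈ Run_W(w))`,
the empty sum being `0` (the monoid unit `𝟘`). -/
noncomputable def WTA.behavior {A M : Type} [AddCommMonoid M]
    (val : List ((M × M) × ℝ≥0) → M) (W : WTA A M) (w : TimedWord A) : M :=
  ∑ᶠ es ∈ W.toTimedAutomaton.RunOn w, val (W.runWord w.1 es)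

/-- A quantitative timed language `r : 𝕋A⁺ → M` is recognizable over the timed valuation
monoid `(M, +, val, 𝟘)` by a WTA whose underlying timed automaton satisfies `P`. -/
def QTLRecognizableBy {A M : Type} [AddCommMonoid M] (val : List ((M × M) × ℝ≥0) → M)
    (P : TimedAutomaton A → Prop) (r : TimedWord A → M) : Prop :=
  ∃ W : WTA A M, P W.toTimedAutomaton ∧ ∀ w, W.behavior val w = r w

/-- Recognizability (no restriction on the underlying timed automaton). -/
def QTLRecognizable {A M : Type} [AddCommMonoid M] (val : List ((M × M) × ℝ≥0) → M)
    (r : TimedWord A → M) : Prop :=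
  ∃ W : WTA A M, ∀ w, W.behavior val w = r w

/-- Renaming of timed words along `h : Γ → A`. -/
def mapTimedWord {Γ A : Type} (h : Γ → A) (v : TimedWord Γ) : TimedWord A :=
  ⟨v.1.map (fun p => (h p.1, p.2)), by
    cases v with
    | mk l hl => cases l with
      | nil => exact absurd rfl hl
      | cons p l => simp⟩

/-- `h(r)(w) = Σ (r(v) : v ∈ 𝕋Γ⁺, h(v) = w)` (a finite sum when `Γ` is finite). -/
noncomputable def pushQTL {Γ A M : Type} [AddCommMonoid M] (h : Γ → A)
    (r : TimedWord Γ → M) (w : TimedWord A) : M :=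
  ∑ᶠ v ∈ { v : TimedWord Γ | mapTimedWord h v = w }, r v

/-- `(val ∘ g)(w) = val((g(a₁),t₁)…(g(aₙ),tₙ))`. -/
def valComp {A M : Type} (val : List ((M × M) × ℝ≥0) → M) (g : A → M × M)
    (w : TimedWord A) : M :=
  val (w.1.map (fun p => (g p.1, p.2)))

/-- The intersection `r ∩ 𝓛` of a quantitative timed language with a timed language. -/
noncomputable def interQTL {A M : Type} [Zero M] (r : TimedWord A → M)
    (𝓛 : Set (TimedWord A)) (w : TimedWord A) : M :=
  if w ∈ 𝓛 then r w else 0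

/-- Membership in the Nivat class `N^P(A, 𝕄)`: `𝕃 = h((val ∘ g) ∩ 𝓛)` for some alphabet `Γ`,
maps `h : Γ → A`, `g : Γ → M × M` and a timed language `𝓛` recognizable by a timed
automaton satisfying `P`. -/
def NivatMem {A M : Type} [AddCommMonoid M] (val : List ((M × M) × ℝ≥0) → M)
    (P : ∀ {Γ : Type}, TimedAutomaton Γ → Prop) (𝕃 : TimedWord A → M) : Prop :=
  ∃ (Γ : Type) (_ : Finite Γ) (_ : Nonempty Γ) (h : Γ → A) (g : Γ → M × M)
    (𝓛 : Set (TimedWord Γ)),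
      TLRecognizableBy P 𝓛 ∧ ∀ w, 𝕃 w = pushQTL h (interQTL (valComp val g) 𝓛) w

/-- Membership in the class `H^P(A, 𝕄)`: `𝕃 = h(r)` for some alphabet `Γ`, `h : Γ → A`
and a quantitative timed language `r` recognizable by a WTA whose underlying timed
automaton satisfies `P`. -/
def HMem {A M : Type} [AddCommMonoid M] (val : List ((M × M) × ℝ≥0) → M)
    (P : ∀ {Γ : Type}, TimedAutomaton Γ → Prop) (𝕃 : TimedWord A → M) : Prop :=
  ∃ (Γ : Type) (_ : Finite Γ) (_ : Nonempty Γ) (h : Γ → A) (r : TimedWord Γ → M),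
      QTLRecognizableBy val (fun T => P T) r ∧ ∀ w, 𝕃 w = pushQTL h r w

/-- Idempotency of a timed valuation monoid. -/
def IsIdempotent (M : Type) [Add M] : Prop := ∀ m : M, m + m = m

/-- Location-independence of a timed valuation function: the value of `val` on a non-empty
timed word over `M × M` depends only on the second components and the time stamps. -/
def LocIndep {M : Type} (val : List ((M × M) × ℝ≥0) → M) : Prop :=
  ∀ l l' : List ((M × M) × ℝ≥0), l ≠ [] →
    l.map (fun p => (p.1.2, p.2)) = l'.map (fun p => (p.1.2, p.2)) → val l = val l'


set_option linter.unusedSectionVars false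

section Aux
variable {A : Type} (T : TimedAutomaton A)

@[simp] theorem isRunFrom_nil_nil (ℓ : T.L) (ν : ClockVal T.C) :
    T.IsRunFrom ℓ ν [] [] ↔ ℓ ∈ T.F := Iff.rfl

@[simp] theorem isRunFrom_nil_cons (ℓ : T.L) (ν : ClockVal T.C) (e es) :
    T.IsRunFrom ℓ ν [] (e :: es) ↔ False := Iff.rfl

@[simp] theorem isRunFrom_cons_nil (ℓ : T.L) (ν : ClockVal T.C) (a : A) (t : ℝ≥0) (u) :
    T.IsRunFrom ℓ ν ((a, t) :: u) [] ↔ False := Iff.rfl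

@[simp] theorem isRunFrom_cons_cons (ℓ : T.L) (ν : ClockVal T.C) (a : A) (t : ℝ≥0) (u e es) :
    T.IsRunFrom ℓ ν ((a, t) :: u) (e :: es) ↔
      e ∈ T.E ∧ e.src = ℓ ∧ e.label = a ∧ e.guard.Sat (ν.add t) ∧
      T.IsRunFrom e.dst ((ν.add t).reset e.reset) u es := Iff.rfl

theorem Edge.ext' {L A C : Type} {e₁ e₂ : Edge L A C} (h1 : e₁.src = e₂.src)
    (h2 : e₁.label = e₂.label) (h3 : e₁.guard = e₂.guard) (h4 : e₁.reset = e₂.reset)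
    (h5 : e₁.dst = e₂.dst) : e₁ = e₂ := by
  cases e₁; cases e₂; simp_all

end Aux
theorem finsum_mem_if {α N : Type*} [AddCommMonoid N] (s t : Set α) (f : α → N) :
    (∑ᶠ v ∈ s, if v ∈ t then f v else 0) = ∑ᶠ v ∈ s ∩ t, f v := by
  have h1 : (∑ᶠ v ∈ s, if v ∈ t then f v else 0) = ∑ᶠ v ∈ s, t.indicator f v :=
    finsum_mem_congr rfl (fun v _ => by by_cases hv : v ∈ t <;> simp [hv])
  rw [h1, finsum_mem_def, Set.indicator_indicator, ← finsum_mem_def]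
section Aux2
variable {A : Type} {T : TimedAutomaton A}

theorem seq_to_det (hs : T.Sequential) : T.Deterministic :=
  ⟨hs.1, fun e₁ h₁ e₂ h₂ hsrc hlab hne _ _ => hne (hs.2 e₁ h₁ e₂ h₂ hsrc hlab)⟩

theorem det_runs_unique (hd : T.Deterministic) :
    ∀ (u : List (A × ℝ≥0)) (ℓ : T.L) (ν : ClockVal T.C) (es es' : List (Edge T.L A T.C)),
      T.IsRunFrom ℓ ν u es → T.IsRunFrom ℓ ν u es' → es = es' := by
  intro u
  induction u with
  | nil =>
    intro ℓ ν es es' h h'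
    cases es with
    | nil => cases es' with
      | nil => rfl
      | cons e es' => exact absurd h' (by simp)
    | cons e es => exact absurd h (by simp)
  | cons p u ih =>
    obtain ⟨a, t⟩ := p
    intro ℓ ν es es' h h'
    cases es with
    | nil => exact absurd h (by simp)
    | cons e tl =>
      cases es' with
      | nil => exact absurd h' (by simp)
      | cons e' tl' =>
        simp only [isRunFrom_cons_cons] at h h'
        obtain ⟨hE, hsrc, hlab, hg, hrec⟩ := h
        obtain ⟨hE', hsrc', hlab', hg', hrec'⟩ := h'
        have hee : e = e' := by
          by_contra hne
          exact hd.2 e hE e' hE' (hsrc.trans hsrc'.symm) (hlab.trans hlab'.symm) hne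
            (ν.add t) ⟨hg, hg'⟩
        subst hee
        rw [ih e.dst ((ν.add t).reset e.reset) tl tl' hrec hrec']

theorem det_to_unamb (hd : T.Deterministic) : T.Unambiguous := by
  intro w es hes es' hes'
  obtain ⟨ℓ₀, hℓ₀, h⟩ := hes
  obtain ⟨ℓ₀', hℓ₀', h'⟩ := hes'
  obtain ⟨ℓ, hI⟩ := hd.1
  rw [hI] at hℓ₀ hℓ₀'
  rw [Set.mem_singleton_iff] at hℓ₀ hℓ₀'
  subst hℓ₀; subst hℓ₀'
  exact det_runs_unique hd w.1 ℓ₀' ClockVal.zero es es' h h'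

theorem nivatMem_mono {S M : Type} [AddCommMonoid M] {val : List ((M × M) × ℝ≥0) → M}
    {P Q : ∀ {Γ : Type}, TimedAutomaton Γ → Prop} {𝕃 : TimedWord S → M}
    (hPQ : ∀ (Γ : Type) (T : TimedAutomaton Γ), P T → Q T) :
    NivatMem val P 𝕃 → NivatMem val Q 𝕃 := by
  rintro ⟨Γ, hf, hn, h, g, 𝓛, ⟨T, hT, hLang⟩, heq⟩
  exact ⟨Γ, hf, hn, h, g, 𝓛, ⟨T, hPQ Γ T hT, hLang⟩, heq⟩

end Aux2
section ConA
variable {S M : Type} [Nonempty S] [AddCommMonoid M]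

/-- Alphabet for construction A. -/
def GamA (W : WTA S M) : Type := Option {e : Edge W.L S W.C // e ∈ W.E}

instance GamA.finite (W : WTA S M) : Finite (GamA W) :=
  by haveI := W.finE.to_subtype; haveI := Fintype.ofFinite {e : Edge W.L S W.C // e ∈ W.E}; exact inferInstanceAs (Finite (Option _))

instance GamA.nonempty (W : WTA S M) : Nonempty (GamA W) := ⟨none⟩

noncomputable def hA (W : WTA S M) : GamA W → S :=
  fun o => o.elim (Classical.arbitrary S) (fun e => e.val.label)

def gA (W : WTA S M) : GamA W → M × M :=
  fun o => o.elim (0, 0) (fun e => (W.wtL e.val.src, W.wtE e.val))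

def EA (W : WTA S M) : Set (Edge (Option W.L) (GamA W) W.C) :=
  { d | ∃ (e : Edge W.L S W.C) (he : e ∈ W.E),
      d.label = some ⟨e, he⟩ ∧ d.guard = e.guard ∧ d.reset = e.reset ∧
      d.dst = some e.dst ∧ ((d.src = none ∧ e.src ∈ W.I) ∨ d.src = some e.src) }

theorem EA_finite (W : WTA S M) : (EA W).Finite := by
  haveI := W.finE.to_subtype
  apply Set.Finite.subset (Set.finite_range
    (fun p : {e : Edge W.L S W.C // e ∈ W.E} × Bool =>
      (⟨cond p.2 none (some p.1.val.src), some p.1, p.1.val.guard, p.1.val.reset,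
        some p.1.val.dst⟩ : Edge (Option W.L) (GamA W) W.C)))
  rintro d ⟨e, he, hl, hg, hr, hd, hsrc⟩
  rcases hsrc with ⟨hs, _⟩ | hs
  · refine ⟨(⟨e, he⟩, true), ?_⟩
    exact Edge.ext' hs.symm hl.symm hg.symm hr.symm hd.symm
  · refine ⟨(⟨e, he⟩, false), ?_⟩
    exact Edge.ext' hs.symm hl.symm hg.symm hr.symm hd.symm

@[reducible] def TA (W : WTA S M) : TimedAutomaton (GamA W) where
  L := Option W.L
  C := W.C
  finL := by haveI := W.finL; haveI := Fintype.ofFinite W.L; exact inferInstance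
  finC := W.finC
  I := {none}
  F := some '' W.F
  E := EA W
  finE := EA_finite W

theorem TA_sequential (W : WTA S M) : (TA W).Sequential := by
  refine ⟨⟨none, rfl⟩, ?_⟩
  rintro d₁ ⟨e₁, he₁, hl₁, hg₁, hr₁, hd₁, hs₁⟩ d₂ ⟨e₂, he₂, hl₂, hg₂, hr₂, hd₂, hs₂⟩ hsrc hlab
  have he : e₁ = e₂ := by
    have := hl₁.symm.trans (hlab.trans hl₂)
    simpa using congrArg (Option.map Subtype.val) this
  subst he
  refine Edge.ext' hsrc (hl₁.trans hl₂.symm) (hg₁.trans hg₂.symm) (hr₁.trans hr₂.symm)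
    (hd₁.trans hd₂.symm)

end ConA
section ConA2
variable {S M : Type} [Nonempty S] [AddCommMonoid M]

theorem A_fwd (W : WTA S M) :
    ∀ (es : List (Edge W.L S W.C)) (u : List (S × ℝ≥0)) (ℓ : W.L) (ν : ClockVal W.C),
      W.toTimedAutomaton.IsRunFrom ℓ ν u es →
      ∃ v : List (GamA W × ℝ≥0),
        v.map (fun p => (hA W p.1, p.2)) = u ∧
        v.filterMap (fun p => p.1.map Subtype.val) = es ∧
        v.map (fun p => (gA W p.1, p.2)) = W.runWord u es ∧
        ∃ fs, (TA W).IsRunFrom (some ℓ) ν v fs := by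
  intro es
  induction es with
  | nil =>
    intro u ℓ ν hrun
    cases u with
    | cons p u => obtain ⟨a, t⟩ := p; exact absurd hrun (by simp)
    | nil =>
      refine ⟨[], rfl, rfl, rfl, [], ?_⟩
      simp only [isRunFrom_nil_nil]
      exact ⟨ℓ, hrun, rfl⟩
  | cons e es ih =>
    intro u ℓ ν hrun
    cases u with
    | nil => exact absurd hrun (by simp)
    | cons p u =>
      obtain ⟨a, t⟩ := p
      rw [isRunFrom_cons_cons] at hrun
      obtain ⟨hE, hsrc, hlab, hg, hrec⟩ := hrun
      obtain ⟨v', h1, h2, h3, fs', h4⟩ := ih u e.dst ((ν.add t).reset e.reset) hrec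
      refine ⟨(some ⟨e, hE⟩, t) :: v', ?_, ?_, ?_, ?_⟩
      · rw [List.map_cons, h1]
        have : hA W (some ⟨e, hE⟩) = a := hlab
        rw [this]
      · rw [List.filterMap_cons]
        simpa using h2
      · simp only [List.map_cons, WTA.runWord, List.zipWith_cons_cons, gA, Option.elim]
        exact congrArg _ h3
      · refine ⟨⟨some ℓ, some ⟨e, hE⟩, e.guard, e.reset, some e.dst⟩ :: fs', ?_⟩
        refine (isRunFrom_cons_cons (TA W) _ _ _ _ _ _ _).mpr ?_
        refine ⟨⟨e, hE, rfl, rfl, rfl, rfl, Or.inr (by rw [hsrc])⟩, rfl, rfl, hg, h4⟩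

theorem A_bwd (W : WTA S M) :
    ∀ (v : List (GamA W × ℝ≥0)) (fs : List (Edge (Option W.L) (GamA W) W.C))
      (ℓ : W.L) (ν : ClockVal W.C),
      (TA W).IsRunFrom (some ℓ) ν v fs →
      W.toTimedAutomaton.IsRunFrom ℓ ν (v.map (fun p => (hA W p.1, p.2)))
          (v.filterMap (fun p => p.1.map Subtype.val)) ∧
        v.map (fun p => (gA W p.1, p.2)) =
          W.runWord (v.map (fun p => (hA W p.1, p.2)))
            (v.filterMap (fun p => p.1.map Subtype.val)) ∧
        (∀ p ∈ v, p.1 ≠ none) := by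
  intro v
  induction v with
  | nil =>
    intro fs ℓ ν hrun
    cases fs with
    | cons f fs => exact absurd hrun (fun h => h)
    | nil =>
      obtain ⟨ℓ', hℓ', heq⟩ : some ℓ ∈ some '' W.F := hrun
      obtain rfl : ℓ' = ℓ := Option.some_injective _ heq
      exact ⟨hℓ', rfl, fun p hp => absurd hp List.not_mem_nil⟩
  | cons p v ih =>
    intro fs ℓ ν hrun
    obtain ⟨γ, t⟩ := p
    cases fs with
    | nil => exact absurd hrun (fun h => h)
    | cons d fs =>
      rw [isRunFrom_cons_cons] at hrun
      obtain ⟨hdE, hdsrc, hdlab, hdg, hdrec⟩ := hrun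
      obtain ⟨e, he, hl, hg, hr, hd, hbr⟩ := hdE
      have hsrc : e.src = ℓ := by
        rcases hbr with ⟨h0, _⟩ | h0
        · rw [hdsrc] at h0; cases h0
        · rw [hdsrc] at h0; exact (Option.some_injective _ h0).symm
      have hγ : γ = some ⟨e, he⟩ := hdlab ▸ hl
      rw [hd, hr] at hdrec
      obtain ⟨ihr, ihw, ihz⟩ := ih fs e.dst ((ν.add t).reset e.reset) hdrec
      have hgsat : e.guard.Sat (ν.add t) := hg ▸ hdg
      subst hγ
      refine ⟨?_, ?_, ?_⟩
      · simp only [List.map_cons, List.filterMap_cons, Option.map_some, isRunFrom_cons_cons]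
        exact ⟨he, hsrc, rfl, hgsat, ihr⟩
      · simp only [List.map_cons, List.filterMap_cons, Option.map_some, WTA.runWord,
          List.zipWith_cons_cons, gA, Option.elim]
        exact congrArg _ ihw
      · intro q hq
        rcases List.mem_cons.mp hq with rfl | hq
        · exact Option.some_ne_none _
        · exact ihz _ hq

end ConA2
section ConA3
variable {S M : Type} [Nonempty S] [AddCommMonoid M]

theorem A_bwd0 (W : WTA S M) (v : List (GamA W × ℝ≥0))
    (fs : List (Edge (Option W.L) (GamA W) W.C)) (hne : v ≠ [])
    (hrun : (TA W).IsRunFrom none ClockVal.zero v fs) :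
    (∃ ℓ₀ ∈ W.I, W.toTimedAutomaton.IsRunFrom ℓ₀ ClockVal.zero
        (v.map (fun p => (hA W p.1, p.2))) (v.filterMap (fun p => p.1.map Subtype.val))) ∧
      v.map (fun p => (gA W p.1, p.2)) =
        W.runWord (v.map (fun p => (hA W p.1, p.2)))
          (v.filterMap (fun p => p.1.map Subtype.val)) ∧
      (∀ p ∈ v, p.1 ≠ none) := by
  cases v with
  | nil => exact absurd rfl hne
  | cons p v =>
    obtain ⟨γ, t⟩ := p
    cases fs with
    | nil => exact absurd hrun (fun h => h)
    | cons d fs =>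
      rw [isRunFrom_cons_cons] at hrun
      obtain ⟨hdE, hdsrc, hdlab, hdg, hdrec⟩ := hrun
      obtain ⟨e, he, hl, hg, hr, hd, hbr⟩ := hdE
      have hI : e.src ∈ W.I := by
        rcases hbr with ⟨_, h0⟩ | h0
        · exact h0
        · rw [hdsrc] at h0; cases h0
      have hγ : γ = some ⟨e, he⟩ := hdlab ▸ hl
      rw [hd, hr] at hdrec
      obtain ⟨ihr, ihw, ihz⟩ := A_bwd W v fs e.dst ((ClockVal.zero.add t).reset e.reset) hdrec
      have hgsat : e.guard.Sat (ClockVal.zero.add t) := hg ▸ hdg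
      subst hγ
      refine ⟨⟨e.src, hI, ?_⟩, ?_, ?_⟩
      · simp only [List.map_cons, List.filterMap_cons, Option.map_some, isRunFrom_cons_cons]
        exact ⟨he, trivial, rfl, hgsat, ihr⟩
      · simp only [List.map_cons, List.filterMap_cons, Option.map_some, WTA.runWord,
          List.zipWith_cons_cons, gA, Option.elim]
        exact congrArg _ ihw
      · intro q hq
        rcases List.mem_cons.mp hq with rfl | hq
        · exact Option.some_ne_none _
        · exact ihz _ hq

theorem A_fwd0 (W : WTA S M) (u : List (S × ℝ≥0)) (es : List (Edge W.L S W.C))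
    (ℓ₀ : W.L) (hI : ℓ₀ ∈ W.I)
    (hrun : W.toTimedAutomaton.IsRunFrom ℓ₀ ClockVal.zero u es) (hne : u ≠ []) :
    ∃ v : List (GamA W × ℝ≥0),
      v.map (fun p => (hA W p.1, p.2)) = u ∧
      v.filterMap (fun p => p.1.map Subtype.val) = es ∧
      ∃ fs, (TA W).IsRunFrom none ClockVal.zero v fs := by
  cases u with
  | nil => exact absurd rfl hne
  | cons p u =>
    obtain ⟨a, t⟩ := p
    cases es with
    | nil => exact absurd hrun (by simp)
    | cons e es =>
      rw [isRunFrom_cons_cons] at hrun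
      obtain ⟨hE, hsrc, hlab, hg, hrec⟩ := hrun
      obtain ⟨v', h1, h2, _h3, fs', h4⟩ := A_fwd W es u e.dst ((ClockVal.zero.add t).reset e.reset) hrec
      refine ⟨(some ⟨e, hE⟩, t) :: v', ?_, ?_, ?_⟩
      · rw [List.map_cons, h1]
        have : hA W (some ⟨e, hE⟩) = a := hlab
        rw [this]
      · rw [List.filterMap_cons]
        simpa using h2
      · refine ⟨⟨none, some ⟨e, hE⟩, e.guard, e.reset, some e.dst⟩ :: fs', ?_⟩
        refine (isRunFrom_cons_cons (TA W) _ _ _ _ _ _ _).mpr ?_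
        exact ⟨⟨e, hE, rfl, rfl, rfl, rfl, Or.inl ⟨rfl, hsrc ▸ hI⟩⟩, rfl, rfl, hg, h4⟩

theorem A_inj (W : WTA S M) :
    ∀ v v' : List (GamA W × ℝ≥0), (∀ p ∈ v, p.1 ≠ none) → (∀ p ∈ v', p.1 ≠ none) →
      v.map (fun p => (hA W p.1, p.2)) = v'.map (fun p => (hA W p.1, p.2)) →
      v.filterMap (fun p => p.1.map Subtype.val) = v'.filterMap (fun p => p.1.map Subtype.val) →
      v = v' := by
  intro v
  induction v with
  | nil =>
    intro v' _ _ hm _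
    cases v' with
    | nil => rfl
    | cons p v' => exact absurd hm (by simp)
  | cons p v ih =>
    intro v' hz hz' hm hf
    cases v' with
    | nil => exact absurd hm (by simp)
    | cons q v' =>
      obtain ⟨γ, t⟩ := p
      obtain ⟨δ, s⟩ := q
      obtain ⟨x, hx⟩ := Option.ne_none_iff_exists'.mp (hz _ List.mem_cons_self)
      obtain ⟨y, hy⟩ := Option.ne_none_iff_exists'.mp (hz' _ List.mem_cons_self)
      subst hx; subst hy
      simp only [List.map_cons, List.cons.injEq, Prod.mk.injEq] at hm
      simp only [List.filterMap_cons, Option.map_some] at hf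
      rw [List.cons_eq_cons] at hf
      obtain ⟨hxy, hf⟩ := hf
      have : x = y := Subtype.ext hxy
      subst this
      have ht : t = s := hm.1.2
      subst ht
      rw [ih v' (fun p hp => hz p (List.mem_cons_of_mem _ hp))
        (fun p hp => hz' p (List.mem_cons_of_mem _ hp)) hm.2 hf]

theorem lemA {S' M' : Type} [Finite S'] [Nonempty S'] [AddCommMonoid M']
    (val : List ((M' × M') × ℝ≥0) → M') (𝕃 : TimedWord S' → M') :
    QTLRecognizable val 𝕃 → NivatMem val (fun {_} T => T.Sequential) 𝕃 := by
  rintro ⟨W, hW⟩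
  refine ⟨GamA W, inferInstance, inferInstance, hA W, gA W, (TA W).Lang,
    ⟨TA W, TA_sequential W, rfl⟩, fun w => ?_⟩
  rw [← hW w]
  have step1 : pushQTL (hA W) (interQTL (valComp val (gA W)) (TA W).Lang) w
      = ∑ᶠ v ∈ ({v : TimedWord (GamA W) | mapTimedWord (hA W) v = w} ∩ (TA W).Lang),
          valComp val (gA W) v :=
    finsum_mem_if _ _ _
  rw [step1]
  have hbij : Set.BijOn (fun v : TimedWord (GamA W) => v.1.filterMap (fun p => p.1.map Subtype.val))
      ({v : TimedWord (GamA W) | mapTimedWord (hA W) v = w} ∩ (TA W).Lang)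
      (W.toTimedAutomaton.RunOn w) := by
    refine ⟨?_, ?_, ?_⟩
    · rintro v ⟨hv, fs, ℓ₀, hℓ₀, hrun⟩
      have hℓ : ℓ₀ = none := hℓ₀
      subst hℓ
      obtain ⟨⟨ℓ₀', hI, hrunW⟩, _, _⟩ := A_bwd0 W v.1 fs v.2 hrun
      have hw1 : v.1.map (fun p => (hA W p.1, p.2)) = w.1 := congrArg Subtype.val hv
      rw [hw1] at hrunW
      exact ⟨ℓ₀', hI, hrunW⟩
    · rintro v ⟨hv, fs, ℓ₀, hℓ₀, hrun⟩ v' ⟨hv', fs', ℓ₀', hℓ₀', hrun'⟩ heq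
      have hℓ : ℓ₀ = none := hℓ₀
      subst hℓ
      have hℓ' : ℓ₀' = none := hℓ₀'
      subst hℓ'
      obtain ⟨-, -, hz⟩ := A_bwd0 W v.1 fs v.2 hrun
      obtain ⟨-, -, hz'⟩ := A_bwd0 W v'.1 fs' v'.2 hrun'
      have e1 : v.1.map (fun p => (hA W p.1, p.2)) = w.1 := congrArg Subtype.val hv
      have e2 : v'.1.map (fun p => (hA W p.1, p.2)) = w.1 := congrArg Subtype.val hv'
      have hm : v.1.map (fun p => (hA W p.1, p.2)) = v'.1.map (fun p => (hA W p.1, p.2)) :=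
        e1.trans e2.symm
      exact Subtype.ext (A_inj W v.1 v'.1 hz hz' hm heq)
    · rintro es ⟨ℓ₀, hI, hrun⟩
      obtain ⟨v, h1, h2, fs, h4⟩ := A_fwd0 W w.1 es ℓ₀ hI hrun w.2
      have hvne : v ≠ [] := by
        intro h0
        rw [h0] at h1
        exact w.2 h1.symm
      refine ⟨⟨v, hvne⟩, ⟨?_, ?_⟩, h2⟩
      · exact Subtype.ext h1
      · exact ⟨fs, none, rfl, h4⟩
  have hval : ∀ v ∈ ({v : TimedWord (GamA W) | mapTimedWord (hA W) v = w} ∩ (TA W).Lang),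
      valComp val (gA W) v = val (W.runWord w.1 (v.1.filterMap (fun p => p.1.map Subtype.val))) := by
    rintro v ⟨hv, fs, ℓ₀, hℓ₀, hrun⟩
    have hℓ : ℓ₀ = none := hℓ₀
    subst hℓ
    obtain ⟨-, hw, -⟩ := A_bwd0 W v.1 fs v.2 hrun
    have hw1 : v.1.map (fun p => (hA W p.1, p.2)) = w.1 := congrArg Subtype.val hv
    rw [hw1] at hw
    exact congrArg val hw
  exact (finsum_mem_eq_of_bijOn _ hbij hval).symm

end ConA3
section ConB
variable {S M : Type} [AddCommMonoid M] {Γ : Type} [Finite Γ]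

def EB (h : Γ → S) (T : TimedAutomaton Γ) : Set (Edge (T.L × Option Γ) S T.C) :=
  { d | ∃ e, e ∈ T.E ∧ ∃ o : Option Γ,
      d = ⟨(e.src, some e.label), h e.label, e.guard, e.reset, (e.dst, o)⟩ }

theorem EB_finite (h : Γ → S) (T : TimedAutomaton Γ) : (EB h T).Finite := by
  haveI := T.finE.to_subtype
  haveI := Fintype.ofFinite Γ
  apply Set.Finite.subset (Set.finite_range
    (fun p : {e : Edge T.L Γ T.C // e ∈ T.E} × Option Γ =>
      (⟨(p.1.val.src, some p.1.val.label), h p.1.val.label, p.1.val.guard, p.1.val.reset,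
        (p.1.val.dst, p.2)⟩ : Edge (T.L × Option Γ) S T.C)))
  rintro d ⟨e, he, o, rfl⟩
  exact ⟨(⟨e, he⟩, o), rfl⟩

@[reducible] def WB (h : Γ → S) (g : Γ → M × M) (T : TimedAutomaton Γ) : WTA S M where
  L := T.L × Option Γ
  C := T.C
  finL := by
    haveI := T.finL; haveI := Fintype.ofFinite T.L; haveI := Fintype.ofFinite Γ
    exact inferInstance
  finC := T.finC
  I := {p | p.1 ∈ T.I}
  F := {p | p.1 ∈ T.F ∧ p.2 = none}
  E := EB h T
  finE := EB_finite h T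
  wtL := fun p => p.2.elim 0 fun γ => (g γ).1
  wtE := fun d => d.src.2.elim 0 fun γ => (g γ).2

def extractV (T : TimedAutomaton Γ) (u : List (S × ℝ≥0))
    (ds : List (Edge (T.L × Option Γ) S T.C)) : List (Γ × ℝ≥0) :=
  (List.zipWith (fun (p : S × ℝ≥0) d => (d.src.2, p.2)) u ds).filterMap
    (fun q => q.1.map fun γ => (γ, q.2))

def fsB (T : TimedAutomaton Γ) (ds : List (Edge (T.L × Option Γ) S T.C)) :
    List (Edge T.L Γ T.C) :=
  ds.filterMap (fun d => d.src.2.map fun γ => ⟨d.src.1, γ, d.guard, d.reset, d.dst.1⟩)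

def nextO (T : TimedAutomaton Γ) : List (Edge T.L Γ T.C) → Option Γ
  | [] => none
  | e :: _ => some e.label

def buildB (h : Γ → S) (T : TimedAutomaton Γ) :
    List (Edge T.L Γ T.C) → List (Edge (T.L × Option Γ) S T.C)
  | [] => []
  | e :: fs =>
    ⟨(e.src, some e.label), h e.label, e.guard, e.reset, (e.dst, nextO T fs)⟩ :: buildB h T fs

theorem B_bwd (h : Γ → S) (g : Γ → M × M) (T : TimedAutomaton Γ) :
    ∀ (u : List (S × ℝ≥0)) (ds : List (Edge (T.L × Option Γ) S T.C))
      (ℓ : T.L) (o : Option Γ) (ν : ClockVal T.C),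
      (WB h g T).toTimedAutomaton.IsRunFrom (ℓ, o) ν u ds →
      T.IsRunFrom ℓ ν (extractV T u ds) (fsB T ds) ∧
      (extractV T u ds).map (fun p => (h p.1, p.2)) = u ∧
      (WB h g T).runWord u ds = (extractV T u ds).map (fun p => (g p.1, p.2)) ∧
      ds = buildB h T (fsB T ds) := by
  intro u
  induction u with
  | nil =>
    intro ds ℓ o ν hrun
    cases ds with
    | cons d ds => exact absurd hrun (fun x => x)
    | nil =>
      obtain ⟨h1, _⟩ : ℓ ∈ T.F ∧ o = none := hrun
      exact ⟨h1, rfl, rfl, rfl⟩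
  | cons p u ih =>
    intro ds ℓ o ν hrun
    obtain ⟨a, t⟩ := p
    cases ds with
    | nil => exact absurd hrun (fun x => x)
    | cons d ds =>
      rw [isRunFrom_cons_cons] at hrun
      obtain ⟨hdE, hdsrc, hdlab, hdg, hdrec⟩ := hrun
      obtain ⟨e, heE, o', rfl⟩ := hdE
      obtain ⟨hsrc, hopt⟩ := Prod.mk.injEq .. ▸ hdsrc
      obtain ⟨ihr, ihm, ihw, ihb⟩ := ih ds e.dst o' ((ν.add t).reset e.reset) hdrec
      have hfsB : fsB T (⟨(e.src, some e.label), h e.label, e.guard, e.reset, (e.dst, o')⟩ :: ds)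
          = e :: fsB T ds := rfl
      have hext : extractV T ((a, t) :: u)
            (⟨(e.src, some e.label), h e.label, e.guard, e.reset, (e.dst, o')⟩ :: ds)
          = (e.label, t) :: extractV T u ds := rfl
      rw [hfsB, hext]
      refine ⟨?_, ?_, ?_, ?_⟩
      · rw [isRunFrom_cons_cons]
        exact ⟨heE, hsrc, rfl, hdg, ihr⟩
      · rw [List.map_cons, ihm]
        have : h e.label = a := hdlab
        rw [this]
      · rw [WTA.runWord, List.zipWith_cons_cons, List.map_cons, ← WTA.runWord, ihw]
        rfl
      · rw [buildB]
        refine List.cons_eq_cons.mpr ⟨?_, ihb⟩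
        have ho' : o' = nextO T (fsB T ds) := by
          cases u with
          | nil =>
            cases ds with
            | cons d' ds' => exact absurd hdrec (fun x => x)
            | nil =>
              obtain ⟨_, h2⟩ : e.dst ∈ T.F ∧ o' = none := hdrec
              rw [h2]; rfl
          | cons q u' =>
            obtain ⟨b, s⟩ := q
            cases ds with
            | nil => exact absurd hdrec (fun x => x)
            | cons d' ds' =>
              rw [isRunFrom_cons_cons] at hdrec
              obtain ⟨hd'E, hd'src, _, _, _⟩ := hdrec
              obtain ⟨e', he'E, o'', rfl⟩ := hd'E
              have : o' = some e'.label := (Prod.mk.injEq .. ▸ hd'src).2.symm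
              rw [this]; rfl
        rw [ho']
  
theorem B_fwd (h : Γ → S) (g : Γ → M × M) (T : TimedAutomaton Γ) :
    ∀ (v : List (Γ × ℝ≥0)) (fs : List (Edge T.L Γ T.C)) (ℓ : T.L) (ν : ClockVal T.C),
      T.IsRunFrom ℓ ν v fs →
      (WB h g T).toTimedAutomaton.IsRunFrom (ℓ, nextO T fs) ν
          (v.map fun p => (h p.1, p.2)) (buildB h T fs) ∧
        extractV T (v.map fun p => (h p.1, p.2)) (buildB h T fs) = v := by
  intro v
  induction v with
  | nil =>
    intro fs ℓ ν hrun
    cases fs with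
    | cons f fs => exact absurd hrun (by simp)
    | nil => exact ⟨⟨hrun, rfl⟩, rfl⟩
  | cons p v ih =>
    intro fs ℓ ν hrun
    obtain ⟨γ, t⟩ := p
    cases fs with
    | nil => exact absurd hrun (by simp)
    | cons e fs =>
      rw [isRunFrom_cons_cons] at hrun
      obtain ⟨heE, hsrc, hlab, hg, hrec⟩ := hrun
      obtain ⟨ihr, ihe⟩ := ih fs e.dst ((ν.add t).reset e.reset) hrec
      subst hlab
      constructor
      · rw [List.map_cons, buildB, isRunFrom_cons_cons]
        refine ⟨⟨e, heE, nextO T fs, rfl⟩, ?_, rfl, hg, ihr⟩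
        show (e.src, some e.label) = (ℓ, nextO T (e :: fs))
        rw [hsrc]
        rfl
      · rw [List.map_cons, buildB]
        have : extractV T ((h e.label, t) :: v.map (fun p => (h p.1, p.2)))
            (⟨(e.src, some e.label), h e.label, e.guard, e.reset, (e.dst, nextO T fs)⟩
              :: buildB h T fs)
            = (e.label, t) :: extractV T (v.map (fun p => (h p.1, p.2))) (buildB h T fs) := rfl
        rw [this, ihe]

end ConB
section ConB2

theorem lemB {S' M' : Type} [AddCommMonoid M']
    (val : List ((M' × M') × ℝ≥0) → M') (𝕃 : TimedWord S' → M') :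
    NivatMem val (fun {_} T => T.Unambiguous) 𝕃 → QTLRecognizable val 𝕃 := by
  rintro ⟨Γ, hfin, hne, h, g, 𝓛, ⟨T, hunamb, rfl⟩, heq⟩
  haveI := hfin; haveI := hne
  refine ⟨WB h g T, fun w => ?_⟩
  rw [heq w]
  have step1 : pushQTL h (interQTL (valComp val g) T.Lang) w
      = ∑ᶠ v ∈ ({v : TimedWord Γ | mapTimedWord h v = w} ∩ T.Lang),
          valComp val g v :=
    finsum_mem_if _ _ _
  rw [step1]
  set Ψ : List (Edge (T.L × Option Γ) S' T.C) → TimedWord Γ := fun ds =>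
    if h0 : extractV T w.1 ds = [] then ⟨[(Classical.arbitrary Γ, 0)], by simp⟩
    else ⟨extractV T w.1 ds, h0⟩ with hΨ
  have key : ∀ ds ∈ (WB h g T).toTimedAutomaton.RunOn w,
      (∃ ℓ₀ ∈ T.I, T.IsRunFrom ℓ₀ ClockVal.zero (extractV T w.1 ds) (fsB T ds)) ∧
      (extractV T w.1 ds).map (fun p => (h p.1, p.2)) = w.1 ∧
      (WB h g T).runWord w.1 ds = (extractV T w.1 ds).map (fun p => (g p.1, p.2)) ∧
      ds = buildB h T (fsB T ds) ∧ extractV T w.1 ds ≠ [] := by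
    rintro ds ⟨q, hqI, hrun⟩
    obtain ⟨h1, h2, h3, h4⟩ := B_bwd h g T w.1 ds q.1 q.2 ClockVal.zero hrun
    have hne' : extractV T w.1 ds ≠ [] := by
      intro h0
      rw [h0] at h2
      exact w.2 h2.symm
    exact ⟨⟨q.1, hqI, h1⟩, h2, h3, h4, hne'⟩
  have hbij : Set.BijOn Ψ ((WB h g T).toTimedAutomaton.RunOn w)
      ({v : TimedWord Γ | mapTimedWord h v = w} ∩ T.Lang) := by
    refine ⟨?_, ?_, ?_⟩
    · intro ds hds
      obtain ⟨⟨ℓ₀, hI, hrunT⟩, h2, _, _, hne'⟩ := key ds hds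
      rw [hΨ]
      simp only [dif_neg hne']
      constructor
      · exact Subtype.ext h2
      · exact ⟨fsB T ds, ℓ₀, hI, hrunT⟩
    · intro ds hds ds' hds' hpsieq
      obtain ⟨⟨ℓ₀, hI, hrunT⟩, h2, _, h4, hne'⟩ := key ds hds
      obtain ⟨⟨ℓ₀', hI', hrunT'⟩, h2', _, h4', hne''⟩ := key ds' hds'
      rw [hΨ] at hpsieq
      simp only [dif_neg hne', dif_neg hne''] at hpsieq
      have hveq : extractV T w.1 ds = extractV T w.1 ds' := congrArg Subtype.val hpsieq
      have hfs : fsB T ds = fsB T ds' := by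
        refine hunamb ⟨extractV T w.1 ds, hne'⟩ ⟨ℓ₀, hI, hrunT⟩ ⟨ℓ₀', hI', ?_⟩
        show T.IsRunFrom ℓ₀' ClockVal.zero (extractV T w.1 ds) (fsB T ds')
        rw [hveq]
        exact hrunT'
      rw [h4, h4', hfs]
    · rintro v ⟨hv, fs, ℓ₀, hI, hrun⟩
      obtain ⟨hrunW, hext⟩ := B_fwd h g T v.1 fs ℓ₀ ClockVal.zero hrun
      have hw1 : v.1.map (fun p => (h p.1, p.2)) = w.1 := congrArg Subtype.val hv
      rw [hw1] at hrunW hext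
      refine ⟨buildB h T fs, ⟨(ℓ₀, nextO T fs), hI, hrunW⟩, ?_⟩
      rw [hΨ]
      have hne' : extractV T w.1 (buildB h T fs) ≠ [] := by
        rw [hext]; exact v.2
      simp only [dif_neg hne']
      exact Subtype.ext hext
  have hval : ∀ ds ∈ (WB h g T).toTimedAutomaton.RunOn w,
      val ((WB h g T).runWord w.1 ds) = valComp val g (Ψ ds) := by
    intro ds hds
    obtain ⟨-, -, h3, -, hne'⟩ := key ds hds
    rw [hΨ]
    simp only [dif_neg hne']
    exact congrArg val h3
  exact finsum_mem_eq_of_bijOn Ψ hbij hval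

end ConB2
/-- Nivat theorem for weighted timed automata. For every alphabet `Σ`
and every timed valuation monoid `𝕄`:
`Rec(Σ,𝕄) = N^Seq(Σ,𝕄) = N^Det(Σ,𝕄) = N^Unamb(Σ,𝕄) ⊆ N(Σ,𝕄)`. -/
theorem nivat_theorem_for_WTA {S M : Type} [Finite S] [Nonempty S]
    [AddCommMonoid M] (val : List ((M × M) × ℝ≥0) → M) :
    (∀ 𝕃 : TimedWord S → M,
        QTLRecognizable val 𝕃 ↔ NivatMem val (fun {_} T => T.Sequential) 𝕃) ∧
    (∀ 𝕃 : TimedWord S → M,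
        QTLRecognizable val 𝕃 ↔ NivatMem val (fun {_} T => T.Deterministic) 𝕃) ∧
    (∀ 𝕃 : TimedWord S → M,
        QTLRecognizable val 𝕃 ↔ NivatMem val (fun {_} T => T.Unambiguous) 𝕃) ∧
    (∀ 𝕃 : TimedWord S → M,
        QTLRecognizable val 𝕃 → NivatMem val (fun {_} _ => True) 𝕃) := by
  
  have seqD : ∀ (Γ : Type) (T : TimedAutomaton Γ), T.Sequential → T.Deterministic :=
    fun _ _ => seq_to_det
  have detU : ∀ (Γ : Type) (T : TimedAutomaton Γ), T.Deterministic → T.Unambiguous :=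
    fun _ _ => det_to_unamb
  refine ⟨fun 𝕃 => ⟨fun hrec => lemA val 𝕃 hrec,
      fun hn => lemB val 𝕃 (nivatMem_mono detU (nivatMem_mono seqD hn))⟩,
    fun 𝕃 => ⟨fun hrec => nivatMem_mono seqD (lemA val 𝕃 hrec),
      fun hn => lemB val 𝕃 (nivatMem_mono detU hn)⟩,
    fun 𝕃 => ⟨fun hrec => nivatMem_mono detU (nivatMem_mono seqD (lemA val 𝕃 hrec)),
      fun hn => lemB val 𝕃 hn⟩,
    fun 𝕃 hrec => nivatMem_mono (fun _ _ _ => trivial) (lemA val 𝕃 hrec)⟩
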